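/- Let M be a finite abelian group whose order is odd, and b : M × M → e* a nondegenerate symmetric bilinear form with values in the roots of unity of an algebraically closed field e of characteristic 0. Define the Gauss sum G(M,b) = Σ_{m∈M} b(m,m) ∈ e. Then G(M,b)⁴ = |M|². -/

import Mathlib

/-- Hensel-type lifting: solutions to `a² + c² ≡ -1` exist modulo any power of an odd prime. -/
lemma aux_prime_pow_sq_add_sq {p : ℕ} (hp : p.Prime) (hodd : Odd p) (k : ℕ) :
    ∃ a c : ℤ, ((p : ℤ)) ^ (k + 1) ∣ a ^ 2 + c ^ 2 + 1 := by
  haveI : Fact p.Prime := ⟨hp⟩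
  haveI : NeZero p := ⟨hp.pos.ne'⟩
  have hp2 : ((2 : ℤ) : ZMod p) ≠ 0 := by
    rw [Ne, ZMod.intCast_zmod_eq_zero_iff_dvd]
    intro h
    have h2 : (p : ℤ) ≤ 2 := Int.le_of_dvd (by norm_num) h
    have h3 := hp.two_le
    have : p = 2 := by omega
    subst this
    rw [Nat.odd_iff] at hodd; omega
  induction k with
  | zero =>
    obtain ⟨x, y, hxy⟩ := ZMod.sq_add_sq p (-1 : ZMod p)
    refine ⟨(x.val : ℤ), (y.val : ℤ), ?_⟩
    rw [pow_one, ← ZMod.intCast_zmod_eq_zero_iff_dvd]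
    push_cast
    rw [ZMod.natCast_val, ZMod.natCast_val, ZMod.cast_id, ZMod.cast_id, hxy]
    ring
  | succ k ih =>
    obtain ⟨a, c, hu⟩ := ih
    obtain ⟨u, hu⟩ := hu
    -- one of a, c is not divisible by p
    have hmod : ((a : ZMod p)) ^ 2 + ((c : ZMod p)) ^ 2 + 1 = 0 := by
      have : (p : ℤ) ∣ a ^ 2 + c ^ 2 + 1 := dvd_trans (dvd_pow_self _ (Nat.succ_ne_zero _)) ⟨u, hu⟩
      have := (ZMod.intCast_zmod_eq_zero_iff_dvd _ p).2 this
      push_cast at this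
      exact this
    have hac : (a : ZMod p) ≠ 0 ∨ (c : ZMod p) ≠ 0 := by
      by_contra h
      push_neg at h
      rw [h.1, h.2] at hmod
      simp at hmod
    -- WLOG-style helper
    have key : ∀ a c : ℤ, (a : ZMod p) ≠ 0 →
        a ^ 2 + c ^ 2 + 1 = (p : ℤ) ^ (k + 1) * u →
        ∃ a' c' : ℤ, ((p : ℤ)) ^ (k + 2) ∣ a' ^ 2 + c' ^ 2 + 1 := by
      intro a c ha h
      have h2a : (2 : ZMod p) * (a : ZMod p) ≠ 0 :=
        mul_ne_zero (by exact_mod_cast hp2) ha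
      set t : ℤ := (((-(u : ZMod p) * ((2 : ZMod p) * (a : ZMod p))⁻¹ : ZMod p).val : ℕ) : ℤ)
      have ht : ((u + 2 * a * t : ℤ) : ZMod p) = 0 := by
        push_cast [t, ZMod.natCast_val, ZMod.cast_id]
        field_simp [h2a]
        rw [div_self (a := (2 : ZMod p)) (by exact_mod_cast hp2)]
        ring
      have hdvd : (p : ℤ) ∣ u + 2 * a * t := (ZMod.intCast_zmod_eq_zero_iff_dvd _ p).1 ht
      refine ⟨a + t * (p : ℤ) ^ (k + 1), c, ?_⟩
      have expand : (a + t * (p : ℤ) ^ (k + 1)) ^ 2 + c ^ 2 + 1 =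
          (p : ℤ) ^ (k + 1) * (u + 2 * a * t) + t ^ 2 * ((p : ℤ) ^ (k + 1)) ^ 2 := by
        ring_nf
        linear_combination h
      rw [expand]
      apply dvd_add
      · rw [pow_succ]
        exact mul_dvd_mul_left _ hdvd
      · apply Dvd.dvd.mul_left
        rw [← pow_mul]
        exact pow_dvd_pow _ (by omega)
    rcases hac with ha | hc
    · exact key a c ha hu
    · obtain ⟨a', c', h'⟩ := key c a hc (by linarith [hu])
      exact ⟨a', c', h'⟩

/-- For any odd `N`, `-1` is a sum of two squares mod `N`. -/
lemma aux_odd_sq_add_sq (N : ℕ) (h : Odd N) : ∃ x y : ZMod N, x ^ 2 + y ^ 2 + 1 = 0 := by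
  induction N using Nat.recOnPosPrimePosCoprime with
  | prime_pow p n hp hn =>
    have hpodd : Odd p := by
      rcases Nat.Prime.eq_two_or_odd' hp with h2 | ho
      · subst h2
        exfalso
        rcases h with ⟨m, hm⟩
        have : 2 ∣ 2 ^ n := dvd_pow_self 2 (by omega)
        omega
      · exact ho
    obtain ⟨n', rfl⟩ : ∃ n', n = n' + 1 := ⟨n - 1, by omega⟩
    obtain ⟨a, c, hd⟩ := aux_prime_pow_sq_add_sq hp hpodd n'
    refine ⟨(a : ZMod (p ^ (n' + 1))), (c : ZMod (p ^ (n' + 1))), ?_⟩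
    have : (((a ^ 2 + c ^ 2 + 1 : ℤ)) : ZMod (p ^ (n' + 1))) = 0 := by
      rw [ZMod.intCast_zmod_eq_zero_iff_dvd]
      exact_mod_cast hd
    push_cast at this
    exact this
  | zero => exact absurd h (by decide)
  | one => exact ⟨0, 0, Subsingleton.elim _ _⟩
  | coprime a b ha hb hab iha ihb =>
    rw [Nat.odd_mul] at h
    obtain ⟨x₁, y₁, h₁⟩ := iha h.1
    obtain ⟨x₂, y₂, h₂⟩ := ihb h.2
    let E := ZMod.chineseRemainder hab
    refine ⟨E.symm (x₁, x₂), E.symm (y₁, y₂), ?_⟩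
    apply E.injective
    rw [map_add, map_add, map_pow, map_pow, map_one, map_zero, E.apply_symm_apply,
      E.apply_symm_apply]
    ext <;> simp [Prod.pow_fst, Prod.pow_snd, h₁, h₂]


/-- A map `b : M × M → eˣ` is bilinear (multiplicatively valued). -/
def IsMulBilin {M : Type*} [AddCommGroup M] {e : Type*} [Field e]
    (b : M → M → eˣ) : Prop :=
  (∀ m₁ m₂ l, b (m₁ + m₂) l = b m₁ l * b m₂ l) ∧
  (∀ m l₁ l₂, b m (l₁ + l₂) = b m l₁ * b m l₂)

/-- Let `M` be a finite abelian group of odd order and `b : M × M → e*` a nondegenerate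
symmetric bilinear form valued in the roots of unity of an algebraically closed field `e`
of characteristic 0. Then the Gauss sum `G(M,b) = Σ_m b(m,m)` satisfies `G(M,b)⁴ = |M|²`. -/
theorem gauss_sum_fourth_power
    {M : Type*} [AddCommGroup M] [Fintype M]
    {e : Type*} [Field e] [IsAlgClosed e] [CharZero e]
    (hodd : Odd (Fintype.card M))
    (b : M → M → eˣ)
    (hbil : IsMulBilin b)
    (hsymm : ∀ m m' : M, b m m' = b m' m)
    (hnd : ∀ m : M, (∀ l : M, b m l = 1) → m = 0)
    (hroot : ∀ m m' : M, ∃ k : ℕ, 0 < k ∧ b m m' ^ k = 1) :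
    (∑ m : M, (b m m : e)) ^ 4 = (Fintype.card M : e) ^ 2 := by
  classical
  obtain ⟨hbl, hbr⟩ := hbil
  set N := Fintype.card M with hNdef
  -- integer powers in each variable
  have hz1 : ∀ (z : ℤ) (m l : M), b (z • m) l = b m l ^ z := by
    intro z m l
    let f : M →+ Additive eˣ := AddMonoidHom.mk' (fun m => Additive.ofMul (b m l))
      (fun m₁ m₂ => congrArg Additive.ofMul (hbl m₁ m₂ l))
    have h := map_zsmul f z m
    have h' : Additive.ofMul (b (z • m) l) = z • Additive.ofMul (b m l) := h
    rw [← ofMul_zpow] at h'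
    exact Additive.ofMul.injective h'
  have hz2 : ∀ (z : ℤ) (m l : M), b m (z • l) = b m l ^ z := by
    intro z m l
    rw [hsymm, hz1, hsymm]
  have hzero1 : ∀ l, b 0 l = 1 := by
    intro l
    have := hz1 0 0 l
    simpa using this
  have hzero2 : ∀ m, b m 0 = 1 := fun m => by rw [hsymm]; exact hzero1 m
  have hNsmul : ∀ m : M, (N : ℤ) • m = 0 := by
    intro m
    have : N • m = 0 := card_nsmul_eq_zero
    simpa using this
  have hNpow : ∀ m l, b m l ^ (N : ℤ) = 1 := by
    intro m l
    rw [← hz1, hNsmul, hzero1]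
  -- inverse via exponent
  have hinv : ∀ (x : eˣ), x ^ (N : ℤ) = 1 → ∀ s : ℤ, (N : ℤ) ∣ s + 1 → x ^ s = x⁻¹ := by
    rintro x hx s ⟨t, ht⟩
    have hs : s = (N : ℤ) * t - 1 := by omega
    rw [hs, zpow_sub, zpow_mul, hx, one_zpow, one_mul, zpow_one]
  -- doubling is surjective
  have hdouble : Function.Surjective (fun n : M => n + n) := by
    apply Finite.surjective_of_injective
    intro x y hxy
    simp only at hxy
    have h2 : (x - y) + (x - y) = 0 := by
      have h3 : (x + x) - (y + y) = 0 := by rw [hxy, sub_self]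
      calc (x - y) + (x - y) = (x + x) - (y + y) := by abel
        _ = 0 := h3
    have hord : addOrderOf (x - y) ∣ 2 := by
      rw [addOrderOf_dvd_iff_nsmul_eq_zero, two_nsmul]; exact h2
    have hordN : addOrderOf (x - y) ∣ N := addOrderOf_dvd_card
    have hord1 : addOrderOf (x - y) = 1 := by
      rcases (Nat.dvd_prime Nat.prime_two).mp hord with h1 | h1
      · exact h1
      · exfalso
        rw [h1] at hordN
        rw [Nat.odd_iff] at hodd
        omega
    have h4 := AddMonoid.addOrderOf_eq_one_iff.mp hord1
    rwa [sub_eq_zero] at h4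
  ------------------------------------------------------------------
  -- Part 1 : G * G' = N
  ------------------------------------------------------------------
  set G : e := ∑ m : M, (b m m : e) with hGdef
  set G' : e := ∑ m : M, (((b m m)⁻¹ : eˣ) : e) with hG'def
  -- the character attached to t
  have hchar : ∀ t : M, t ≠ 0 → ∑ n : M, ((b t n : e)) ^ 2 = 0 := by
    intro t ht
    let χ : AddChar M e :=
      { toFun := fun n => ((b t n : e)) ^ 2
        map_zero_eq_one' := by simp [hzero2]
        map_add_eq_mul' := by
          intro n₁ n₂
          simp only [hbr, Units.val_mul]
          ring }
    have hχ : χ ≠ 1 := by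
      intro hone
      apply ht
      apply hnd
      intro l
      obtain ⟨n, rfl⟩ := hdouble l
      have h1 : ((b t n : e)) ^ 2 = 1 := by
        have := congrArg (fun ψ : AddChar M e => ψ n) hone
        simpa [χ] using this
      have h2 : (b t n) ^ 2 = 1 := Units.ext (by push_cast; exact h1)
      calc b t (n + n) = b t n * b t n := hbr t n n
        _ = (b t n) ^ 2 := (sq _).symm
        _ = 1 := h2
    have := AddChar.sum_eq_zero_of_ne_one hχ
    simpa [χ] using this
  have hGG' : G * G' = (N : e) := by
    rw [hGdef, hG'def, Finset.sum_mul_sum]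
    have swap : ∑ m : M, ∑ n : M, (b m m : e) * (((b n n)⁻¹ : eˣ) : e) =
        ∑ n : M, ∑ m : M, (b m m : e) * (((b n n)⁻¹ : eˣ) : e) := by rw [Finset.sum_comm]
    rw [swap]
    have step : ∀ n : M, ∑ m : M, (b m m : e) * (((b n n)⁻¹ : eˣ) : e) =
        ∑ t : M, (b t t : e) * ((b t n : e)) ^ 2 := by
      intro n
      rw [← Equiv.sum_comp (Equiv.addLeft n) (fun m => (b m m : e) * (((b n n)⁻¹ : eˣ) : e))]
      apply Finset.sum_congr rfl
      intro t _
      have hu : b (n + t) (n + t) * (b n n)⁻¹ = b t t * (b t n) ^ 2 := by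
        have hexp : b (n + t) (n + t) = (b t t * (b t n) ^ 2) * b n n := by
          rw [hbl, hbr, hbr, hsymm n t, sq]
          simp [mul_comm, mul_left_comm, mul_assoc]
        rw [hexp, mul_inv_cancel_right]
      have := congrArg (Units.val : eˣ → e) hu
      simp only [Units.val_mul, Units.val_pow_eq_pow_val] at this
      simpa [Equiv.addLeft] using this
    rw [Finset.sum_congr rfl fun n _ => step n, Finset.sum_comm]
    have inner : ∀ t : M, ∑ n : M, (b t t : e) * ((b t n : e)) ^ 2 =
        if t = 0 then (N : e) else 0 := by
      intro t
      rw [← Finset.mul_sum]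
      by_cases ht : t = 0
      · subst ht
        simp [hzero1, hNdef, Finset.card_univ]
      · rw [hchar t ht, mul_zero, if_neg ht]
    rw [Finset.sum_congr rfl fun t _ => inner t]
    simp [hzero1]
  ------------------------------------------------------------------
  -- Part 2 : G ^ 2 = G' ^ 2
  ------------------------------------------------------------------
  haveI : NeZero N := ⟨Fintype.card_ne_zero⟩
  obtain ⟨x, y, hxy⟩ := aux_odd_sq_add_sq N hodd
  set a : ℤ := (x.val : ℤ) with hadef
  set c : ℤ := (y.val : ℤ) with hcdef
  have hd : (N : ℤ) ∣ a * a + c * c + 1 := by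
    rw [← ZMod.intCast_zmod_eq_zero_iff_dvd]
    push_cast [hadef, hcdef]
    rw [ZMod.natCast_val, ZMod.natCast_val, ZMod.cast_id, ZMod.cast_id]
    linear_combination hxy
  have hsmul_ac : ∀ m : M, (a * a + c * c) • m = -m := by
    intro m
    obtain ⟨t, ht⟩ := hd
    have h1 : a * a + c * c = (N : ℤ) * t - 1 := by omega
    rw [h1, sub_smul, mul_smul, hNsmul, one_smul, zero_sub]
  -- expansion of the quadratic form
  have hexp : ∀ (a' c' : ℤ) (m n : M), b (a' • m + c' • n) (a' • m + c' • n) =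
      b m m ^ (a' * a') * b n n ^ (c' * c') * b m n ^ (a' * c' + a' * c') := by
    intro a' c' m n
    rw [hbl, hbr, hbr]
    simp only [hz1, hz2]
    rw [hsymm n m]
    refine Additive.ofMul.injective ?_
    simp only [ofMul_mul, ofMul_zpow]
    module
  -- pointwise pair identity
  have hpair : ∀ m n : M,
      b (a • m + c • n) (a • m + c • n) * b (c • m + (-a) • n) (c • m + (-a) • n) =
        (b m m * b n n)⁻¹ := by
    intro m n
    rw [hexp a c m n, hexp c (-a) m n]
    have hx : (b m m * b n n) ^ ((N : ℤ)) = 1 := by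
      rw [mul_zpow, hNpow, hNpow, one_mul]
    have hkey : (b m m * b n n) ^ (a * a + c * c) = (b m m * b n n)⁻¹ :=
      hinv _ hx _ hd
    rw [← hkey]
    refine Additive.ofMul.injective ?_
    simp only [ofMul_mul, ofMul_zpow]
    module
  -- the equivalence (m, n) ↦ (a m + c n, c m - a n)
  have expand1 : ∀ m n : M, a • (a • m + c • n) + c • (c • m + (-a) • n) =
      (a * a + c * c) • m := by intro m n; module
  have expand2 : ∀ m n : M, c • (a • m + c • n) + (-a) • (c • m + (-a) • n) =
      (a * a + c * c) • n := by intro m n; module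
  let Φ : M × M ≃ M × M :=
    { toFun := fun p => (a • p.1 + c • p.2, c • p.1 + (-a) • p.2)
      invFun := fun p => (-(a • p.1 + c • p.2), -(c • p.1 + (-a) • p.2))
      left_inv := by
        rintro ⟨m, n⟩
        ext
        · show -(a • (a • m + c • n) + c • (c • m + (-a) • n)) = m
          rw [expand1, hsmul_ac, neg_neg]
        · show -(c • (a • m + c • n) + (-a) • (c • m + (-a) • n)) = n
          rw [expand2, hsmul_ac, neg_neg]
      right_inv := by
        rintro ⟨m, n⟩
        ext
        · show a • (-(a • m + c • n)) + c • (-(c • m + (-a) • n)) = m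
          rw [smul_neg, smul_neg, ← neg_add, expand1, hsmul_ac, neg_neg]
        · show c • (-(a • m + c • n)) + (-a) • (-(c • m + (-a) • n)) = n
          rw [smul_neg, smul_neg, ← neg_add, expand2, hsmul_ac, neg_neg] }
  have hG2 : G ^ 2 = G' ^ 2 := by
    rw [hGdef, hG'def, sq, sq, Finset.sum_mul_sum, Finset.sum_mul_sum,
      ← Fintype.sum_prod_type', ← Fintype.sum_prod_type']
    rw [← Equiv.sum_comp Φ (fun p : M × M => (b p.1 p.1 : e) * (b p.2 p.2 : e))]
    apply Finset.sum_congr rfl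
    rintro ⟨m, n⟩ -
    show (b (a • m + c • n) (a • m + c • n) : e) * (b (c • m + (-a) • n) (c • m + (-a) • n) : e) =
      (((b m m)⁻¹ : eˣ) : e) * (((b n n)⁻¹ : eˣ) : e)
    have := congrArg (Units.val : eˣ → e) (hpair m n)
    simp only [Units.val_mul, mul_inv_rev] at this ⊢
    rw [this]
    ring
  ------------------------------------------------------------------
  calc G ^ 4 = G ^ 2 * G ^ 2 := by ring
    _ = G ^ 2 * G' ^ 2 := by rw [hG2]
    _ = (G * G') ^ 2 := by ring
    _ = (N : e) ^ 2 := by rw [hGG']
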